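/- If n divides m and m/n = p^t for a prime p and t ≥ 1, then no integer k with 0 < k < p can be written as k = a(x)·Φ_m(x) + b(x)·Φ_n(x) with a, b ∈ ℤ[x]; i.e., p is the smallest positive integer in the ideal of ℤ[x] generated by Φ_m and Φ_n. -/
import Mathlib

open Polynomial

lemma cyclotomic_dvd_mul_pow (n p : ℕ) [Fact (Nat.Prime p)] :
    ∀ t : ℕ, 1 ≤ t → cyclotomic n (ZMod p) ∣ cyclotomic (n * p ^ t) (ZMod p) := by
  intro t ht
  induction t with
  | zero => omega
  | succ s ih =>
    rcases Nat.eq_or_lt_of_le ht with h1 | h2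
    · -- s + 1 = 1, so s = 0
      have hs : s = 0 := by omega
      subst hs
      rw [pow_one]
      by_cases hd : p ∣ n
      · rw [cyclotomic_mul_prime_dvd_eq_pow (ZMod p) hd]
        exact dvd_pow_self _ (Fact.out (p := p.Prime)).pos.ne'
      · rw [cyclotomic_mul_prime_eq_pow_of_not_dvd (ZMod p) hd]
        exact dvd_pow_self _ (by have := (Fact.out (p := p.Prime)).two_le; omega)
    · have hs : 1 ≤ s := by omega
      have : n * p ^ (s + 1) = (n * p ^ s) * p := by ring
      rw [this, cyclotomic_mul_prime_dvd_eq_pow (ZMod p)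
        (Dvd.dvd.mul_left (dvd_pow_self p (by omega)) n)]
      exact (ih hs).trans (dvd_pow_self _ (Fact.out (p := p.Prime)).pos.ne')

theorem cyclotomic_prime_pow_minimal (m n p t : ℕ) (hn : 0 < n) (hdvd : n ∣ m)
    (hp : p.Prime) (ht : 1 ≤ t) (hq : m / n = p ^ t) :
    ∀ k : ℕ, 0 < k → k < p →
      ¬ ∃ a b : ℤ[X], a * cyclotomic m ℤ + b * cyclotomic n ℤ = C (k : ℤ) := by
  haveI : Fact p.Prime := ⟨hp⟩
  intro k hk hkp ⟨a, b, hab⟩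
  have hm : m = n * p ^ t := by
    rcases hdvd with ⟨c, rfl⟩
    rw [Nat.mul_div_cancel_left c hn] at hq
    rw [hq]
  -- map to ZMod p
  have h2 := congrArg (Polynomial.map (Int.castRingHom (ZMod p))) hab
  simp only [Polynomial.map_add, Polynomial.map_mul, map_cyclotomic, Polynomial.map_C,
    map_intCast] at h2
  have hdvd' : cyclotomic n (ZMod p) ∣ (C ((Int.castRingHom (ZMod p)) (k : ℤ))) := by
    rw [← h2, hm]
    exact dvd_add (Dvd.dvd.mul_left (cyclotomic_dvd_mul_pow n p t ht) _)
      (Dvd.dvd.mul_left dvd_rfl _)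
  have hk0 : ((k : ℤ) : ZMod p) ≠ 0 := by
    push_cast
    rw [Ne, ZMod.natCast_eq_zero_iff]
    intro h
    exact absurd (Nat.le_of_dvd hk h) (by omega)
  have hk0' : ((Int.castRingHom (ZMod p)) (k : ℤ)) ≠ 0 := hk0
  have hdeg := Polynomial.degree_le_of_dvd hdvd' (Polynomial.C_ne_zero.mpr hk0')
  rw [Polynomial.degree_C hk0', degree_cyclotomic] at hdeg
  have : n.totient = 0 := by simpa using hdeg
  exact absurd this (Nat.totient_pos.mpr hn).ne'
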